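/- There are only finitely many nonnegative n×n matrices all of whose entries are of the form Σ_α 1/d_α where the d_α are positive integers with Σ_α d_α ≤ d; consequently, there exists β with 0 < β ≤ 1 such that for every irreducible such matrix A with λ(A) ≥ 1, the (unique up to scale) positive eigenvector v of A for the eigenvalue λ(A), normalized so that max_i v_i = 1, satisfies min_i v_i ≥ β. -/

import Mathlib

/-- The spectral radius of a real square matrix: the supremum of `|μ|` over
complex eigenvalues `μ` of the matrix. -/
noncomputable def specRad {ι : Type*} [Fintype ι] [DecidableEq ι]
    (A : Matrix ι ι ℝ) : ℝ :=
  sSup {r : ℝ | ∃ μ ∈ spectrum ℂ (A.map (Complex.ofReal ·)), r = ‖μ‖}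

/-- A nonnegative matrix is irreducible if for every `i, j` some power has a
positive `(i,j)` entry. -/
def MatIrreducible {ι : Type*} [Fintype ι] [DecidableEq ι]
    (A : Matrix ι ι ℝ) : Prop :=
  ∀ i j : ι, ∃ q : ℕ, 0 < (A ^ q) i j

/-- `A` is a matrix each of whose entries is a sum `Σ_α 1/d_{i,j,α}` of reciprocals of
positive integers, with `Σ_{i,α} d_{i,j,α} ≤ d` for each column `j`. -/
def IsThurstonLinearMatrix (n d : ℕ) (A : Matrix (Fin n) (Fin n) ℝ) : Prop :=
  ∃ D : Fin n → Fin n → Multiset ℕ,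
    (∀ i j, ∀ a ∈ D i j, 0 < a) ∧
    (∀ j, (∑ i, (D i j).sum) ≤ d) ∧
    (∀ i j, A i j = ((D i j).map (fun a => (1 : ℝ) / a)).sum)

lemma aux_map_coe (s : Multiset ℕ) :
    (s.map (fun a => (1 : ℝ) / a)) = s.map (fun a : ℕ => 1 / (a : ℝ)) := by
  simp only [Multiset.pure_def, Multiset.bind_def, Multiset.bind_singleton,
    Multiset.map_map, Function.comp_apply]

/-- Powers of an entrywise-nonnegative matrix are entrywise nonnegative. -/
lemma aux_pow_nonneg {n : ℕ} {A : Matrix (Fin n) (Fin n) ℝ} (hA : ∀ i j, 0 ≤ A i j) :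
    ∀ q i j, 0 ≤ (A ^ q) i j := by
  intro q
  induction q with
  | zero =>
    intro i j
    rw [pow_zero, Matrix.one_apply]
    split <;> norm_num
  | succ q ih =>
    intro i j
    rw [pow_succ', Matrix.mul_apply]
    exact Finset.sum_nonneg fun k _ => mul_nonneg (hA i k) (ih k j)

lemma aux_decomp {n : ℕ} {A : Matrix (Fin n) (Fin n) ℝ} (hA : ∀ i j, 0 ≤ A i j)
    (q : ℕ) (i j : Fin n) (h : 0 < (A ^ (q + 1)) i j) :
    ∃ k, 0 < A i k ∧ 0 < (A ^ q) k j := by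
  rw [pow_succ', Matrix.mul_apply] at h
  by_contra hc
  push_neg at hc
  refine absurd h (not_lt.mpr (Finset.sum_nonpos ?_))
  intro k _
  rcases (hA i k).lt_or_eq with hk | hk
  · have h0 : (A ^ q) k j = 0 := le_antisymm (hc k hk) (aux_pow_nonneg hA q k j)
    simp [h0]
  · simp [← hk]

/-- From positivity of a power entry, extract a chain (path) in the positivity graph. -/
lemma aux_chain {n : ℕ} {A : Matrix (Fin n) (Fin n) ℝ} (hA : ∀ i j, 0 ≤ A i j) :
    ∀ q i j, 0 < (A ^ (q + 1)) i j →
      ∃ l : List (Fin n), List.Chain (fun a b => 0 < A a b) i (l ++ [j]) ∧ l.length = q := by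
  intro q
  induction q with
  | zero =>
    intro i j h
    obtain ⟨k, hik, hk⟩ := aux_decomp hA 0 i j h
    have hkj : k = j := by
      by_contra hkj
      rw [pow_zero, Matrix.one_apply_ne hkj] at hk
      exact lt_irrefl 0 hk
    subst hkj
    exact ⟨[], List.Chain.cons hik List.Chain.nil, rfl⟩
  | succ q ih =>
    intro i j h
    obtain ⟨k, hik, hk⟩ := aux_decomp hA (q + 1) i j h
    obtain ⟨l, hl, hlen⟩ := ih k j hk
    exact ⟨k :: l, List.Chain.cons hik hl, by simp [hlen]⟩

lemma aux_dup {α : Type*} : ∀ l : List α, ¬ l.Nodup → ∃ a x b c, l = a ++ x :: (b ++ x :: c) := by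
  intro l
  induction l with
  | nil => intro h; exact absurd List.nodup_nil h
  | cons y t ih =>
    intro h
    rw [List.nodup_cons] at h
    push_neg at h
    by_cases hy : y ∈ t
    · obtain ⟨b, c, rfl⟩ := List.append_of_mem hy
      exact ⟨[], y, b, c, rfl⟩
    · obtain ⟨a, x, b, c, rfl⟩ := ih (h hy)
      exact ⟨y :: a, x, b, c, rfl⟩

/-- Any chain can be shortened to one of length less than `n`. -/
lemma aux_shorten {n : ℕ} (hn : 0 < n) (step : Fin n → Fin n → Prop) :
    ∀ N (l : List (Fin n)) (i j : Fin n), l.length ≤ N → List.Chain step i (l ++ [j]) →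
      ∃ l' : List (Fin n), l'.length < n ∧ List.Chain step i (l' ++ [j]) := by
  intro N
  induction N with
  | zero =>
    intro l i j hlen hc
    have : l = [] := List.length_eq_zero_iff.mp (Nat.le_zero.mp hlen)
    subst this
    exact ⟨[], hn, hc⟩
  | succ N ih =>
    intro l i j hlen hc
    by_cases hmem : i ∈ l
    · obtain ⟨a, b, rfl⟩ := List.append_of_mem hmem
      rw [List.append_assoc, List.cons_append] at hc
      have h2 := (List.isChain_cons_split.mp hc).2
      exact ih b i j (by simp at hlen ⊢; omega) h2
    · by_cases hnd : l.Nodup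
      · refine ⟨l, ?_, hc⟩
        have : (i :: l).Nodup := List.nodup_cons.mpr ⟨hmem, hnd⟩
        have := List.Nodup.length_le_card this
        simpa using this
      · obtain ⟨a, x, b, c, rfl⟩ := aux_dup l hnd
        have hc' : List.Chain step i (a ++ x :: (b ++ x :: (c ++ [j]))) := by
          simpa [List.append_assoc] using hc
        have h1 := (List.isChain_cons_split.mp hc').1
        have h2 := (List.isChain_cons_split.mp hc').2
        have h3 := (List.isChain_cons_split.mp h2).2
        have hnew : List.Chain step i ((a ++ x :: c) ++ [j]) := by
          rw [List.append_assoc, List.cons_append]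
          exact List.isChain_cons_split.mpr ⟨h1, h3⟩
        refine ih (a ++ x :: c) i j ?_ hnew
        simp at hlen ⊢
        omega

/-- Along a chain in the positivity graph, values of `v` decrease by at most a factor `c`. -/
lemma aux_value {n : ℕ} {A : Matrix (Fin n) (Fin n) ℝ} {v : Fin n → ℝ} {c : ℝ}
    (hc : 0 < c) (hstep : ∀ a b, 0 < A a b → c * v b ≤ v a) :
    ∀ (l : List (Fin n)) (i j : Fin n), List.Chain (fun a b => 0 < A a b) i (l ++ [j]) →
      c ^ (l.length + 1) * v j ≤ v i := by
  intro l
  induction l with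
  | nil =>
    intro i j hch
    rw [List.nil_append, List.Chain, List.chain_cons] at hch
    simpa using hstep i j hch.1
  | cons k l ih =>
    intro i j hch
    rw [List.cons_append, List.Chain, List.chain_cons] at hch
    have h1 := hstep i k hch.1
    have h2 := ih k j hch.2
    have h3 : c * (c ^ (l.length + 1) * v j) ≤ c * v k :=
      mul_le_mul_of_nonneg_left h2 hc.le
    calc c ^ ((k :: l).length + 1) * v j = c * (c ^ (l.length + 1) * v j) := by
          simp [List.length_cons]; ring
      _ ≤ c * v k := h3
      _ ≤ v i := h1

theorem finitely_many_thurston_matrices_and_eigenvector_bound (n d : ℕ) (hn : 0 < n) :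
    {A : Matrix (Fin n) (Fin n) ℝ | IsThurstonLinearMatrix n d A}.Finite ∧
    ∃ β : ℝ, 0 < β ∧ β ≤ 1 ∧
      ∀ A : Matrix (Fin n) (Fin n) ℝ, IsThurstonLinearMatrix n d A →
        MatIrreducible A → 1 ≤ specRad A →
        ∀ v : Fin n → ℝ, (∀ i, 0 < v i) →
          A.mulVec v = specRad A • v →
          Finset.univ.sup' (Finset.univ_nonempty_iff.mpr (Fin.pos_iff_nonempty.mp hn)) v = 1 →
          ∀ i, β ≤ v i := by
  constructor
  · -- Finiteness
    set t : Multiset ℕ := d • ((Finset.range (d + 1)).val) with ht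
    have hfin : ({s : Multiset ℕ | s ≤ t}).Finite :=
      (Set.finite_Icc 0 t).subset fun s hs => ⟨Multiset.zero_le s, hs⟩
    have hpi1 : (Set.pi Set.univ fun _ : Fin n => {s : Multiset ℕ | s ≤ t}).Finite :=
      Set.Finite.pi fun _ => hfin
    have hpi2 : (Set.pi Set.univ fun _ : Fin n =>
        (Set.pi Set.univ fun _ : Fin n => {s : Multiset ℕ | s ≤ t})).Finite :=
      Set.Finite.pi fun _ => hpi1
    have himg := hpi2.image
      (fun D : Fin n → Fin n → Multiset ℕ =>
        Matrix.of fun i j => ((D i j).map (fun a => (1 : ℝ) / a)).sum)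
    refine himg.subset ?_
    rintro A ⟨D, hpos, hsum, hent⟩
    simp only [aux_map_coe] at hent
    refine ⟨D, ?_, ?_⟩
    · intro i _
      intro j _
      show D i j ≤ t
      rw [Multiset.le_iff_count]
      intro a
      by_cases ha : a ∈ D i j
      · have hcard : (D i j).card ≤ (D i j).sum := by
          have : ((D i j).map (fun _ => 1)).sum ≤ ((D i j).map id).sum :=
            Multiset.sum_map_le_sum_map _ _ (fun x hx => hpos i j x hx)
          simpa using this
        have hsumle : (D i j).sum ≤ d := by
          calc (D i j).sum ≤ ∑ i', (D i' j).sum :=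
                Finset.single_le_sum (f := fun i' => (D i' j).sum)
                  (fun _ _ => Nat.zero_le _) (Finset.mem_univ i)
            _ ≤ d := hsum j
        have hale : a ≤ d := by
          calc a ≤ (D i j).sum := Multiset.single_le_sum (fun _ _ => Nat.zero_le _) a ha
            _ ≤ d := hsumle
        have hct : t.count a = d := by
          rw [ht, Multiset.count_nsmul]
          have : a ∈ (Finset.range (d + 1)).val := by
            simp [Finset.mem_range]; omega
          rw [Multiset.count_eq_one_of_mem (Finset.range (d + 1)).nodup this]
          ring
        rw [hct]
        calc (D i j).count a ≤ (D i j).card := Multiset.count_le_card a _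
          _ ≤ (D i j).sum := hcard
          _ ≤ d := hsumle
      · simp [Multiset.count_eq_zero_of_notMem ha]
    · ext i j
      simp only [Matrix.of_apply, aux_map_coe]
      exact (hent i j).symm
  · -- Eigenvector bound
    set P : ℝ := (n : ℝ) * ((d : ℝ) + 1) ^ 2 with hP
    have hP1 : 1 ≤ P := by
      have hn1 : (1 : ℝ) ≤ (n : ℝ) := by exact_mod_cast hn
      have hd1 : (1 : ℝ) ≤ ((d : ℝ) + 1) ^ 2 := by
        have : (0 : ℝ) ≤ (d : ℝ) := Nat.cast_nonneg d
        nlinarith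
      nlinarith
    have hPpos : 0 < P := lt_of_lt_of_le one_pos hP1
    refine ⟨(1 / P) ^ (n + 1), pow_pos (one_div_pos.mpr hPpos) _, ?_, ?_⟩
    · refine pow_le_one₀ (one_div_pos.mpr hPpos).le ?_
      rw [div_le_one hPpos]; exact hP1
    intro A hA hirr hspec v hv heig hsup i
    obtain ⟨D, hpos, hsum, hent⟩ := hA
    simp only [aux_map_coe] at hent
    -- basic entry facts
    have hAnn : ∀ i j, 0 ≤ A i j := by
      intro i j
      rw [hent i j]
      refine Multiset.sum_nonneg ?_
      intro x hx
      obtain ⟨a, _, rfl⟩ := Multiset.mem_map.mp hx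
      positivity
    have hAle : ∀ i j, A i j ≤ d := by
      intro i j
      rw [hent i j]
      have h1 : ((D i j).map (fun a : ℕ => 1 / (a : ℝ))).sum ≤ ((D i j).map (fun _ => (1 : ℝ))).sum := by
        apply Multiset.sum_map_le_sum_map
        intro x hx
        have := hpos i j x hx
        rw [div_le_one (by exact_mod_cast this)]
        exact_mod_cast this
      have h2 : ((D i j).map (fun _ => (1 : ℝ))).sum = (D i j).card := by simp
      have hcard : (D i j).card ≤ d := by
        have hc1 : ((D i j).map (fun _ => 1)).sum ≤ ((D i j).map id).sum :=
          Multiset.sum_map_le_sum_map _ _ (fun x hx => hpos i j x hx)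
        have hc2 : (D i j).sum ≤ d :=
          le_trans (Finset.single_le_sum (f := fun i' => (D i' j).sum)
            (fun _ _ => Nat.zero_le _) (Finset.mem_univ i)) (hsum j)
        simp at hc1
        omega
      calc ((D i j).map (fun a : ℕ => 1 / (a : ℝ))).sum ≤ (D i j).card := h1.trans h2.le
        _ ≤ d := by exact_mod_cast hcard
    have hAlow : ∀ a b, 0 < A a b → 1 / ((d : ℝ) + 1) ≤ A a b := by
      intro a b h
      rw [hent a b] at h ⊢
      have hne : D a b ≠ 0 := by
        rintro h0
        rw [h0] at h
        simp at h
      obtain ⟨x, hx⟩ := Multiset.exists_mem_of_ne_zero hne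
      have hxpos := hpos a b x hx
      have hxle : x ≤ d :=
        le_trans (Multiset.single_le_sum (fun _ _ => Nat.zero_le _) x hx)
          (le_trans (Finset.single_le_sum (f := fun i' => (D i' b).sum)
            (fun _ _ => Nat.zero_le _) (Finset.mem_univ a)) (hsum b))
      have h1 : (1 : ℝ) / ((d : ℝ) + 1) ≤ 1 / (x : ℝ) := by
        apply one_div_le_one_div_of_le
        · exact_mod_cast hxpos
        · linarith [(show (x : ℝ) ≤ d by exact_mod_cast hxle)]
      refine h1.trans ?_
      apply Multiset.single_le_sum
      · intro y hy
        obtain ⟨a', _, rfl⟩ := Multiset.mem_map.mp hy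
        positivity
      · exact Multiset.mem_map_of_mem _ hx
    -- eigen equation componentwise
    have heig' : ∀ a, ∑ j, A a j * v j = specRad A * v a := by
      intro a
      have := congrFun heig a
      rwa [Matrix.mulVec, dotProduct] at this
    have hvle : ∀ j, v j ≤ 1 := by
      intro j
      rw [← hsup]
      exact Finset.le_sup' v (Finset.mem_univ j)
    obtain ⟨i0, _, hi0⟩ := Finset.exists_mem_eq_sup'
      (Finset.univ_nonempty_iff.mpr (Fin.pos_iff_nonempty.mp hn)) v
    have hvi0 : v i0 = 1 := by rw [← hi0, hsup]
    have hlamub : specRad A ≤ (n : ℝ) * ((d : ℝ) + 1) := by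
      have h0 := heig' i0
      rw [hvi0, mul_one] at h0
      rw [← h0]
      calc ∑ j, A i0 j * v j ≤ ∑ _j : Fin n, ((d : ℝ) + 1) := by
            apply Finset.sum_le_sum
            intro j _
            have := hAle i0 j
            have hvj := hvle j
            have hvj0 := (hv j).le
            nlinarith
        _ = (n : ℝ) * ((d : ℝ) + 1) := by
            rw [Finset.sum_const, Finset.card_univ, Fintype.card_fin, nsmul_eq_mul]
    have hstep : ∀ a b, 0 < A a b → (1 / P) * v b ≤ v a := by
      intro a b hab
      have h1 : A a b * v b ≤ specRad A * v a := by
        rw [← heig' a]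
        exact Finset.single_le_sum (f := fun j => A a j * v j)
          (fun j _ => mul_nonneg (hAnn a j) (hv j).le) (Finset.mem_univ b)
      have h2 : 1 / ((d : ℝ) + 1) * v b ≤ specRad A * v a := by
        refine le_trans ?_ h1
        exact mul_le_mul_of_nonneg_right (hAlow a b hab) (hv b).le
      -- now divide: v a ≥ v b / ((d+1) * specRad A) ≥ v b / P
      have hd1 : (0 : ℝ) < (d : ℝ) + 1 := by positivity
      have hlam1 : (1 : ℝ) ≤ specRad A := hspec
      rw [div_mul_eq_mul_div, div_le_iff₀ hPpos, one_mul]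
      have hcancel : ((d : ℝ) + 1) * (1 / ((d : ℝ) + 1)) = 1 := mul_one_div_cancel hd1.ne'
      have hvb : v b ≤ ((d : ℝ) + 1) * (specRad A * v a) := by
        have hm := mul_le_mul_of_nonneg_left h2 hd1.le
        rwa [← mul_assoc, hcancel, one_mul] at hm
      calc v b ≤ ((d : ℝ) + 1) * (specRad A * v a) := hvb
        _ ≤ ((d : ℝ) + 1) * ((n : ℝ) * ((d : ℝ) + 1)) * v a := by
            have hva := (hv a).le
            nlinarith [mul_le_mul_of_nonneg_right hlamub hva]
        _ = v a * P := by rw [hP]; ring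
    -- chain argument
    obtain ⟨q, hq⟩ := hirr i i0
    rcases q with _ | q
    · -- q = 0 : i = i0
      have : i = i0 := by
        by_contra hij
        rw [pow_zero, Matrix.one_apply_ne hij] at hq
        exact lt_irrefl 0 hq
      rw [this, hvi0]
      refine pow_le_one₀ (one_div_pos.mpr hPpos).le ?_
      rw [div_le_one hPpos]; exact hP1
    · obtain ⟨l, hchain, hlen⟩ := aux_chain hAnn q i i0 hq
      obtain ⟨l', hl'len, hl'chain⟩ :=
        aux_shorten hn (fun a b => 0 < A a b) l.length l i i0 le_rfl hchain
      have hval := aux_value (one_div_pos.mpr hPpos) hstep l' i i0 hl'chain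
      rw [hvi0, mul_one] at hval
      refine le_trans ?_ hval
      apply pow_le_pow_of_le_one (one_div_pos.mpr hPpos).le
      · rw [div_le_one hPpos]; exact hP1
      · omega
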